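/- There do not exist an integer a ≥ 1, an integer b, and a constant c such that ν₂(m) + ν₂(m+1) + ... + ν₂(m+a) = ν₂(m+b) + c holds for all m ≥ 1. -/

import Mathlib

open Finset

lemma padicValInt_two_pow (k : ℕ) : padicValInt 2 ((2:ℤ)^k) = k := by
  unfold padicValInt
  rw [Int.natAbs_pow]
  simp [padicValNat.prime_pow]

lemma padicValInt_odd {z : ℤ} (h : Odd z) : padicValInt 2 z = 0 := by
  apply padicValInt.eq_zero_of_not_dvd
  obtain ⟨t, rfl⟩ := h
  rintro ⟨s, hs⟩
  push_cast at hs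
  omega

theorem no_nontrivial_shift :
    ¬ ∃ (a : ℕ) (b c : ℤ), 1 ≤ a ∧
      ∀ m : ℤ, 1 ≤ m →
        (∑ i ∈ Finset.range (a + 1), (padicValInt 2 (m + i) : ℤ)) = padicValInt 2 (m + b) + c := by
  rintro ⟨a, b, c, ha, h⟩
  set k : ℕ := c.toNat + 1 with hk
  have hck : c < (k : ℤ) := by
    have := Int.self_le_toNat c
    omega
  rcases Int.even_or_odd b with hb | hb
  · -- b even: take m = 2^k - 1 (odd), term at i = 1 is ν₂(2^k) = k
    set m : ℤ := 2^k - 1 with hm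
    have h2k : (2:ℤ) ≤ 2^k := by
      calc (2:ℤ) = 2^1 := by ring
      _ ≤ 2^k := by exact pow_le_pow_right₀ (by norm_num) (by omega)
    have hm1 : 1 ≤ m := by omega
    have hev : Even ((2:ℤ)^k) := Int.even_pow.mpr ⟨even_two, by omega⟩
    obtain ⟨s, hs⟩ := hev
    have hodd : Odd (m + b) := by
      rcases hb with ⟨t, ht⟩
      exact ⟨s - 1 + t, by omega⟩
    have key := h m hm1
    rw [padicValInt_odd hodd] at key
    have hterm : (padicValInt 2 (m + (1:ℕ)) : ℤ) = k := by
      have : m + ((1:ℕ):ℤ) = 2^k := by push_cast; omega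
      rw [this, padicValInt_two_pow]
    have hge : (k:ℤ) ≤ ∑ i ∈ Finset.range (a + 1), (padicValInt 2 (m + i) : ℤ) := by
      rw [← hterm]
      apply Finset.single_le_sum (f := fun i : ℕ => (padicValInt 2 (m + i) : ℤ))
      · intro i _; positivity
      · simp; omega
    omega
  · -- b odd: take m = 2^k (even), term at i = 0 is ν₂(2^k) = k
    set m : ℤ := 2^k with hm
    have h2k : (2:ℤ) ≤ 2^k := by
      calc (2:ℤ) = 2^1 := by ring
      _ ≤ 2^k := by exact pow_le_pow_right₀ (by norm_num) (by omega)
    have hm1 : 1 ≤ m := by omega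
    have hev : Even ((2:ℤ)^k) := Int.even_pow.mpr ⟨even_two, by omega⟩
    obtain ⟨s, hs⟩ := hev
    have hodd : Odd (m + b) := by
      rcases hb with ⟨t, ht⟩
      exact ⟨s + t, by omega⟩
    have key := h m hm1
    rw [padicValInt_odd hodd] at key
    have hterm : (padicValInt 2 (m + (0:ℕ)) : ℤ) = k := by
      have : m + ((0:ℕ):ℤ) = 2^k := by push_cast; omega
      rw [this, padicValInt_two_pow]
    have hge : (k:ℤ) ≤ ∑ i ∈ Finset.range (a + 1), (padicValInt 2 (m + i) : ℤ) := by
      rw [← hterm]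
      apply Finset.single_le_sum (f := fun i : ℕ => (padicValInt 2 (m + i) : ℤ))
      · intro i _; positivity
      · simp
    omega
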